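/- Let n ≥ 3 be an odd integer, and let γ_n : {0,…,n−1} → [0,∞) and γ_{2n} : {0,…,2n−1} → [0,∞) satisfy: γ_n(0) = γ_{2n}(0) = 0; γ_n(k) = γ_n(n−k) for 1 ≤ k ≤ n−1; γ_{2n}(k) = γ_{2n}(2n−k) for 1 ≤ k ≤ 2n−1; γ_{2n}(k) ≥ γ_n(k) for 1 ≤ k ≤ (n−1)/2; and γ_{2n}(n−k) − γ_{2n}(k) − 1 ≥ 0 for 0 ≤ k ≤ (n−1)/2. Assume further that for all real x ≥ 0: γ_{2n}(n)·(1−x)² − (1 + x²) + 2x ≥ 0. Then for all a, b ∈ [0,∞)ⁿ, writing λ = (a_0, b_0, a_1, b_1, …, a_{n−1}, b_{n−1}) ∈ [0,∞)^{2n}: ⟨a, Γ(n)a⟩ + ⟨b, Γ(n)b⟩ + (1/(2n))·(‖a‖₂ − ‖b‖₂)² ≤ 2⟨λ, Γ(2n)λ⟩. -/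

import Mathlib

open scoped BigOperators ComplexOrder

/-- The `m × m` DFT matrix with entries `e^{2πijk/m}`. -/
noncomputable def dftMatrix (m : ℕ) : Matrix (Fin m) (Fin m) ℂ :=
  Matrix.of fun j k => Complex.exp (2 * Real.pi * Complex.I * (j.val : ℂ) * (k.val : ℂ) / m)

/-- `Γ(m) = (1/m)·F_m·diag(γ(0),…,γ(m-1))·F_m⁻¹` for a weight `γ : ℕ → ℝ`. -/
noncomputable def GammaMat (m : ℕ) (γ : ℕ → ℝ) : Matrix (Fin m) (Fin m) ℂ :=
  (1 / m : ℂ) • (dftMatrix m * Matrix.diagonal (fun k : Fin m => (γ k.val : ℂ)) * (dftMatrix m)⁻¹)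

/-- `⟨u, Mu⟩ = ∑_j conj(u_j) (Mu)_j` for a real vector `u`. -/
noncomputable def quadForm (m : ℕ) (M : Matrix (Fin m) (Fin m) ℂ) (u : Fin m → ℝ) : ℂ :=
  ∑ j : Fin m, (starRingEnd ℂ) (u j : ℂ) * M.mulVec (fun i => (u i : ℂ)) j

/-- The interleaved vector `λ = (a_0, b_0, a_1, b_1, …, a_{n-1}, b_{n-1})`. -/
noncomputable def interleave (n : ℕ) (a b : Fin n → ℝ) : Fin (2 * n) → ℝ :=
  fun j =>
    if j.val % 2 = 0 then a ⟨j.val / 2, by have := j.isLt; omega⟩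
    else b ⟨j.val / 2, by have := j.isLt; omega⟩

namespace DirichletCompareAux

noncomputable section
open Complex Finset

lemma sum_exp_int (m : ℕ) (hm : 0 < m) (d : ℤ) :
    ∑ k ∈ Finset.range m, Complex.exp (2 * Real.pi * Complex.I * d * k / m) =
      if (m:ℤ) ∣ d then (m:ℂ) else 0 := by
  have hm' : (m:ℂ) ≠ 0 := Nat.cast_ne_zero.2 hm.ne'
  have hπ : (Real.pi : ℂ) ≠ 0 := by exact_mod_cast Real.pi_ne_zero
  have h2 : (2:ℂ) * Real.pi * Complex.I ≠ 0 := by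
    simp [hπ, Complex.I_ne_zero]
  have hterm : ∀ k : ℕ, Complex.exp (2 * Real.pi * Complex.I * d * k / m)
      = Complex.exp (2 * Real.pi * Complex.I * d / m) ^ k := by
    intro k
    rw [← Complex.exp_nat_mul]
    ring_nf
  simp only [hterm]
  by_cases hdvd : (m:ℤ) ∣ d
  · obtain ⟨e, he⟩ := hdvd
    have h1 : Complex.exp (2 * Real.pi * Complex.I * d / m) = 1 := by
      rw [Complex.exp_eq_one_iff]
      refine ⟨e, ?_⟩
      have hd : (d:ℂ) = (m:ℂ) * e := by exact_mod_cast congrArg (Int.cast : ℤ → ℂ) he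
      field_simp [hd]; linear_combination hd
    rw [if_pos ⟨e, he⟩]
    simp [h1]
  · have h1 : Complex.exp (2 * Real.pi * Complex.I * d / m) ≠ 1 := by
      rw [Ne, Complex.exp_eq_one_iff]
      rintro ⟨c, hc⟩
      apply hdvd
      have hd : (d:ℂ) = (c:ℂ) * m := by
        have h3 := hc
        field_simp at h3
        have h4 : (2:ℂ) * Real.pi * Complex.I * d = 2 * Real.pi * Complex.I * ((c:ℂ) * m) := by
          linear_combination (2 * (Real.pi:ℂ) * Complex.I) * h3
        exact mul_left_cancel₀ h2 h4
      have h5 : d = c * m := by exact_mod_cast hd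
      exact ⟨c, by rw [h5, mul_comm]⟩
    rw [geom_sum_eq h1]
    have hpow : Complex.exp (2 * Real.pi * Complex.I * d / m) ^ m = 1 := by
      rw [← Complex.exp_nat_mul, Complex.exp_eq_one_iff]
      exact ⟨d, by field_simp⟩
    rw [if_neg hdvd, hpow]
    simp

def dftConj (m : ℕ) : Matrix (Fin m) (Fin m) ℂ :=
  Matrix.of fun j k => Complex.exp (-(2 * Real.pi * Complex.I * (j.val : ℂ) * (k.val : ℂ) / m))

lemma dft_mul_conj (m : ℕ) (hm : 0 < m) :
    dftMatrix m * ((1/(m:ℂ)) • dftConj m) = 1 := by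
  have hm' : (m:ℂ) ≠ 0 := Nat.cast_ne_zero.2 hm.ne'
  ext j l
  simp only [Matrix.mul_apply, Matrix.smul_apply, dftMatrix, dftConj, Matrix.of_apply,
    smul_eq_mul]
  have hterm : ∀ k : Fin m,
      Complex.exp (2 * Real.pi * Complex.I * (j.val:ℂ) * (k.val:ℂ) / m) *
        ((1/(m:ℂ)) * Complex.exp (-(2 * Real.pi * Complex.I * (k.val:ℂ) * (l.val:ℂ) / m)))
      = (1/(m:ℂ)) * Complex.exp (2 * Real.pi * Complex.I * (((j.val:ℤ) - (l.val:ℤ) : ℤ):ℂ) * (k.val:ℂ) / m) := by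
    intro k
    rw [mul_comm, mul_assoc, ← Complex.exp_add]
    congr 2
    push_cast
    field_simp
    ring
  rw [Finset.sum_congr rfl (fun k _ => hterm k), ← Finset.mul_sum]
  have := sum_exp_int m hm ((j.val:ℤ) - (l.val:ℤ))
  rw [Fin.sum_univ_eq_sum_range
    (fun k => Complex.exp (2 * Real.pi * Complex.I * (((j.val:ℤ) - (l.val:ℤ) : ℤ):ℂ) * (k:ℂ) / m)), this]
  by_cases hjl : j = l
  · subst hjl
    simp [Matrix.one_apply, hm']
  · have hne : ¬ ((m:ℤ) ∣ ((j.val:ℤ) - (l.val:ℤ))) := by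
      intro hdvd
      have habs : |(j.val:ℤ) - (l.val:ℤ)| < m := by
        have := j.isLt; have := l.isLt; rw [abs_sub_lt_iff]; omega
      have := Int.eq_zero_of_abs_lt_dvd hdvd habs
      have : j.val = l.val := by omega
      exact hjl (Fin.ext this)
    rw [if_neg hne]
    simp [Matrix.one_apply, Ne.symm, hjl]

/-- The (positively-signed) DFT of a real vector. -/
def Tr (m : ℕ) (u : Fin m → ℝ) (k : ℕ) : ℂ :=
  ∑ j : Fin m, (u j : ℂ) * Complex.exp (2 * Real.pi * Complex.I * (j.val:ℂ) * (k:ℂ) / m)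

lemma Tr_conj (m : ℕ) (u : Fin m → ℝ) (k : ℕ) :
    (starRingEnd ℂ) (Tr m u k) =
      ∑ j : Fin m, (u j : ℂ) * Complex.exp (-(2 * Real.pi * Complex.I * (j.val:ℂ) * (k:ℂ) / m)) := by
  rw [Tr, map_sum]
  refine Finset.sum_congr rfl fun j _ => ?_
  rw [map_mul, Complex.conj_ofReal, ← Complex.exp_conj]
  congr 1
  simp [map_div₀, Complex.conj_I, map_ofNat]
  ring_nf

lemma quad_eq (m : ℕ) (hm : 0 < m) (γ : ℕ → ℝ) (u : Fin m → ℝ) :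
    quadForm m (GammaMat m γ) u =
      (((∑ k ∈ Finset.range m, γ k * Complex.normSq (Tr m u k)) / (m^2) : ℝ) : ℂ) := by
  have hm' : (m:ℂ) ≠ 0 := Nat.cast_ne_zero.2 hm.ne'
  have hinv : (dftMatrix m)⁻¹ = (1/(m:ℂ)) • dftConj m :=
    Matrix.inv_eq_right_inv (dft_mul_conj m hm)
  rw [quadForm, GammaMat, hinv]
  have hRHS : (((∑ k ∈ Finset.range m, γ k * Complex.normSq (Tr m u k)) / (m^2) : ℝ) : ℂ)
      = ∑ k : Fin m, (1/(m:ℂ)) * ((1/(m:ℂ)) * ((γ k.val : ℂ) * (Tr m u k.val * (starRingEnd ℂ) (Tr m u k.val)))) := by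
    rw [← Fin.sum_univ_eq_sum_range (fun k => γ k * Complex.normSq (Tr m u k)) m]
    push_cast
    rw [Finset.sum_div]
    refine Finset.sum_congr rfl fun k _ => ?_
    rw [Complex.mul_conj]
    push_cast
    ring
  rw [hRHS]
  have hM : ∀ j l : Fin m,
      (dftMatrix m * Matrix.diagonal (fun k : Fin m => (γ k.val : ℂ)) * ((1/(m:ℂ)) • dftConj m)) j l
        = ∑ k : Fin m, (1/(m:ℂ)) * ((γ k.val : ℂ) *
            (Complex.exp (2 * Real.pi * Complex.I * (j.val:ℂ) * (k.val:ℂ) / m) *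
             Complex.exp (-(2 * Real.pi * Complex.I * (l.val:ℂ) * (k.val:ℂ) / m)))) := by
    intro j l
    rw [Matrix.mul_apply]
    refine Finset.sum_congr rfl fun k _ => ?_
    rw [Matrix.mul_diagonal, Matrix.smul_apply]
    simp only [dftMatrix, dftConj, Matrix.of_apply, smul_eq_mul]
    rw [show -(2 * Real.pi * Complex.I * (k.val:ℂ) * (l.val:ℂ) / m)
        = -(2 * Real.pi * Complex.I * (l.val:ℂ) * (k.val:ℂ) / m) by ring]
    ring
  simp only [Matrix.smul_mulVec, Pi.smul_apply, smul_eq_mul]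
  have hMV : ∀ j : Fin m,
      (dftMatrix m * Matrix.diagonal (fun k : Fin m => (γ k.val : ℂ)) * ((1/(m:ℂ)) • dftConj m)).mulVec (fun i => (u i : ℂ)) j
        = ∑ k : Fin m, (1/(m:ℂ)) * ((γ k.val : ℂ) *
            (Complex.exp (2 * Real.pi * Complex.I * (j.val:ℂ) * (k.val:ℂ) / m) *
             (starRingEnd ℂ) (Tr m u k.val))) := by
    intro j
    simp only [Matrix.mulVec, dotProduct]
    calc ∑ l : Fin m, ((dftMatrix m * Matrix.diagonal (fun k : Fin m => (γ k.val : ℂ)) * ((1/(m:ℂ)) • dftConj m)) j l) * (u l : ℂ)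
        = ∑ l : Fin m, ∑ k : Fin m, (1/(m:ℂ)) * ((γ k.val : ℂ) *
            (Complex.exp (2 * Real.pi * Complex.I * (j.val:ℂ) * (k.val:ℂ) / m) *
             ((u l : ℂ) * Complex.exp (-(2 * Real.pi * Complex.I * (l.val:ℂ) * (k.val:ℂ) / m))))) := by
          refine Finset.sum_congr rfl fun l _ => ?_
          rw [hM j l, Finset.sum_mul]
          refine Finset.sum_congr rfl fun k _ => ?_
          ring
      _ = ∑ k : Fin m, (1/(m:ℂ)) * ((γ k.val : ℂ) *
            (Complex.exp (2 * Real.pi * Complex.I * (j.val:ℂ) * (k.val:ℂ) / m) *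
             (starRingEnd ℂ) (Tr m u k.val))) := by
          rw [Finset.sum_comm]
          refine Finset.sum_congr rfl fun k _ => ?_
          rw [Tr_conj, Finset.mul_sum, Finset.mul_sum, Finset.mul_sum]
  rw [Finset.sum_congr rfl (fun j (_ : j ∈ Finset.univ) => by rw [hMV j] :
      ∀ j ∈ Finset.univ, (starRingEnd ℂ) ((u j : ℝ) : ℂ) * ((1/(m:ℂ)) * ((dftMatrix m * Matrix.diagonal (fun k : Fin m => (γ k.val : ℂ)) * ((1/(m:ℂ)) • dftConj m)).mulVec (fun i => (u i : ℂ)) j))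
        = (starRingEnd ℂ) ((u j : ℝ) : ℂ) * ((1/(m:ℂ)) * ∑ k : Fin m, (1/(m:ℂ)) * ((γ k.val : ℂ) *
            (Complex.exp (2 * Real.pi * Complex.I * (j.val:ℂ) * (k.val:ℂ) / m) *
             (starRingEnd ℂ) (Tr m u k.val)))))]
  have step : ∀ j : Fin m, (starRingEnd ℂ) ((u j:ℝ):ℂ) * ((1/(m:ℂ)) * ∑ k : Fin m, (1/(m:ℂ)) * ((γ k.val : ℂ) *
        (Complex.exp (2 * Real.pi * Complex.I * (j.val:ℂ) * (k.val:ℂ) / m) * (starRingEnd ℂ) (Tr m u k.val))))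
      = ∑ k : Fin m, (1/(m:ℂ)) * ((1/(m:ℂ)) * ((γ k.val:ℂ) * (((u j:ℂ) *
          Complex.exp (2 * Real.pi * Complex.I * (j.val:ℂ) * (k.val:ℂ) / m)) * (starRingEnd ℂ) (Tr m u k.val)))) := by
    intro j
    rw [Finset.mul_sum, Finset.mul_sum]
    refine Finset.sum_congr rfl fun k _ => ?_
    rw [Complex.conj_ofReal]
    ring
  rw [Finset.sum_congr rfl (fun j _ => step j), Finset.sum_comm]
  refine Finset.sum_congr rfl fun k _ => ?_
  set C := (starRingEnd ℂ) (Tr m u k.val) with hC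
  rw [Tr, Finset.sum_mul, Finset.mul_sum, Finset.mul_sum, Finset.mul_sum]

lemma dvd_iff_eq (m : ℕ) (j l : Fin m) : (m:ℤ) ∣ ((j.val:ℤ) - (l.val:ℤ)) ↔ j = l := by
  constructor
  · intro h
    have habs : |(j.val:ℤ) - (l.val:ℤ)| < m := by
      have := j.isLt; have := l.isLt; rw [abs_sub_lt_iff]; omega
    have := Int.eq_zero_of_abs_lt_dvd h habs
    exact Fin.ext (by omega)
  · rintro rfl; simp

lemma parseval (m : ℕ) (hm : 0 < m) (u : Fin m → ℝ) :
    ∑ k ∈ Finset.range m, Complex.normSq (Tr m u k) = m * ∑ j : Fin m, (u j)^2 := by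
  have hm' : (m:ℂ) ≠ 0 := Nat.cast_ne_zero.2 hm.ne'
  have key : (∑ k ∈ Finset.range m, (Complex.normSq (Tr m u k) : ℂ))
      = (m : ℂ) * ∑ j : Fin m, ((u j : ℂ))^2 := by
    calc ∑ k ∈ Finset.range m, (Complex.normSq (Tr m u k) : ℂ)
        = ∑ k ∈ Finset.range m, ∑ j : Fin m, ∑ l : Fin m,
            ((u j:ℂ)*(u l:ℂ)) * Complex.exp (2*Real.pi*Complex.I*(((j.val:ℤ) - (l.val:ℤ) : ℤ):ℂ)*(k:ℂ)/m) := by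
          refine Finset.sum_congr rfl fun k _ => ?_
          rw [← Complex.mul_conj, Tr_conj, Tr, Finset.sum_mul]
          refine Finset.sum_congr rfl fun j _ => ?_
          rw [Finset.mul_sum]
          refine Finset.sum_congr rfl fun l _ => ?_
          rw [show (u j:ℂ) * Complex.exp (2*Real.pi*Complex.I*(j.val:ℂ)*(k:ℂ)/m) *
              ((u l:ℂ) * Complex.exp (-(2*Real.pi*Complex.I*(l.val:ℂ)*(k:ℂ)/m)))
              = ((u j:ℂ)*(u l:ℂ)) * (Complex.exp (2*Real.pi*Complex.I*(j.val:ℂ)*(k:ℂ)/m) *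
                  Complex.exp (-(2*Real.pi*Complex.I*(l.val:ℂ)*(k:ℂ)/m))) by ring, ← Complex.exp_add]
          congr 2
          push_cast
          field_simp
          ring
      _ = ∑ j : Fin m, ∑ l : Fin m, ((u j:ℂ)*(u l:ℂ)) *
            (if (m:ℤ) ∣ ((j.val:ℤ)-(l.val:ℤ)) then (m:ℂ) else 0) := by
          rw [Finset.sum_comm]
          refine Finset.sum_congr rfl fun j _ => ?_
          rw [Finset.sum_comm]
          refine Finset.sum_congr rfl fun l _ => ?_
          rw [← Finset.mul_sum, sum_exp_int m hm]
      _ = (m : ℂ) * ∑ j : Fin m, ((u j : ℂ))^2 := by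
          rw [Finset.mul_sum]
          refine Finset.sum_congr rfl fun j _ => ?_
          rw [Finset.sum_eq_single j]
          · rw [if_pos ((dvd_iff_eq m j j).2 rfl)]; ring
          · intro l _ hne
            rw [if_neg (fun h => hne ((dvd_iff_eq m j l).1 h).symm), mul_zero]
          · intro h; exact absurd (Finset.mem_univ j) h
  exact_mod_cast key

lemma sum_range_even_odd (n : ℕ) (f : ℕ → ℂ) :
    ∑ j ∈ Finset.range (2*n), f j
      = ∑ i ∈ Finset.range n, f (2*i) + ∑ i ∈ Finset.range n, f (2*i+1) := by
  induction n with
  | zero => simp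
  | succ n ih =>
      rw [show 2*(n+1) = 2*n+1+1 by ring, Finset.sum_range_succ, Finset.sum_range_succ,
        Finset.sum_range_succ (fun i => f (2*i)), Finset.sum_range_succ (fun i => f (2*i+1)), ih]
      ring

lemma Tr_range (m : ℕ) (u : Fin m → ℝ) (k : ℕ) :
    Tr m u k = ∑ j ∈ Finset.range m,
      ((if h : j < m then u ⟨j,h⟩ else 0 : ℝ) : ℂ) * Complex.exp (2*Real.pi*Complex.I*(j:ℂ)*(k:ℂ)/m) := by
  rw [Tr, ← Fin.sum_univ_eq_sum_range (fun j => ((if h : j < m then u ⟨j,h⟩ else 0 : ℝ) : ℂ)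
      * Complex.exp (2*Real.pi*Complex.I*(j:ℂ)*(k:ℂ)/m)) m]
  refine Finset.sum_congr rfl fun j _ => ?_
  rw [dif_pos j.isLt]

lemma Tr_interleave (n : ℕ) (hn : 0 < n) (a b : Fin n → ℝ) (k : ℕ) :
    Tr (2*n) (interleave n a b) k
      = Tr n a k + Complex.exp (((2*Real.pi*k/(2*n) : ℝ)) * Complex.I) * Tr n b k := by
  have hn' : (n:ℂ) ≠ 0 := Nat.cast_ne_zero.2 hn.ne'
  have h1 : Tr (2*n) (interleave n a b) k = ∑ j ∈ Finset.range (2*n),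
      ((if j % 2 = 0 then (if h : j/2 < n then a ⟨j/2,h⟩ else 0) else (if h : j/2 < n then b ⟨j/2,h⟩ else 0) : ℝ) : ℂ)
        * Complex.exp (2*Real.pi*Complex.I*(j:ℂ)*(k:ℂ)/((2*n : ℕ):ℂ)) := by
    rw [Tr, ← Fin.sum_univ_eq_sum_range (fun j =>
      ((if j % 2 = 0 then (if h : j/2 < n then a ⟨j/2,h⟩ else 0) else (if h : j/2 < n then b ⟨j/2,h⟩ else 0) : ℝ) : ℂ)
        * Complex.exp (2*Real.pi*Complex.I*(j:ℂ)*(k:ℂ)/((2*n : ℕ):ℂ))) (2*n)]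
    refine Finset.sum_congr rfl fun j _ => ?_
    have h2 : j.val / 2 < n := by have := j.isLt; omega
    congr 1
    rw [interleave]
    by_cases hpar : j.val % 2 = 0
    · rw [if_pos hpar, if_pos hpar, dif_pos h2]
    · rw [if_neg hpar, if_neg hpar, dif_pos h2]
  rw [h1, sum_range_even_odd]
  have heven : ∀ i ∈ Finset.range n,
      ((if (2*i) % 2 = 0 then (if h : (2*i)/2 < n then a ⟨(2*i)/2,h⟩ else 0) else (if h : (2*i)/2 < n then b ⟨(2*i)/2,h⟩ else 0) : ℝ) : ℂ)
        * Complex.exp (2*Real.pi*Complex.I*((2*i:ℕ):ℂ)*(k:ℂ)/((2*n : ℕ):ℂ))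
      = ((if h : i < n then a ⟨i,h⟩ else 0 : ℝ) : ℂ) * Complex.exp (2*Real.pi*Complex.I*(i:ℂ)*(k:ℂ)/(n:ℂ)) := by
    intro i hi
    have hi' : i < n := Finset.mem_range.1 hi
    have e1 : (2*i) % 2 = 0 := by omega
    have e2 : (2*i)/2 = i := by omega
    rw [if_pos e1, e2]
    congr 2
    push_cast
    field_simp
  have hodd : ∀ i ∈ Finset.range n,
      ((if (2*i+1) % 2 = 0 then (if h : (2*i+1)/2 < n then a ⟨(2*i+1)/2,h⟩ else 0) else (if h : (2*i+1)/2 < n then b ⟨(2*i+1)/2,h⟩ else 0) : ℝ) : ℂ)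
        * Complex.exp (2*Real.pi*Complex.I*((2*i+1:ℕ):ℂ)*(k:ℂ)/((2*n : ℕ):ℂ))
      = Complex.exp (((2*Real.pi*k/(2*n) : ℝ)) * Complex.I) *
          (((if h : i < n then b ⟨i,h⟩ else 0 : ℝ) : ℂ) * Complex.exp (2*Real.pi*Complex.I*(i:ℂ)*(k:ℂ)/(n:ℂ))) := by
    intro i hi
    have e1 : ¬ ((2*i+1) % 2 = 0) := by omega
    have e2 : (2*i+1)/2 = i := by omega
    rw [if_neg e1, e2]
    have e3 : Complex.exp (2*Real.pi*Complex.I*((2*i+1:ℕ):ℂ)*(k:ℂ)/((2*n : ℕ):ℂ))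
        = Complex.exp (((2*Real.pi*k/(2*n) : ℝ)) * Complex.I) * Complex.exp (2*Real.pi*Complex.I*(i:ℂ)*(k:ℂ)/(n:ℂ)) := by
      rw [← Complex.exp_add]
      congr 1
      push_cast
      field_simp
      ring
    rw [e3]
    ring
  rw [Finset.sum_congr rfl heven, Finset.sum_congr rfl hodd, ← Finset.mul_sum,
    ← Tr_range, ← Tr_range]

lemma Tr_add_period (m : ℕ) (hm : 0 < m) (u : Fin m → ℝ) (k : ℕ) :
    Tr m u (m + k) = Tr m u k := by
  have hm' : (m:ℂ) ≠ 0 := Nat.cast_ne_zero.2 hm.ne'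
  rw [Tr, Tr]
  refine Finset.sum_congr rfl fun j _ => ?_
  congr 1
  rw [show (2*Real.pi*Complex.I*(j.val:ℂ)*((m+k:ℕ):ℂ)/m)
      = 2*Real.pi*Complex.I*(j.val:ℂ)*(k:ℂ)/m + ((j.val:ℤ):ℂ)*(2*Real.pi*Complex.I) by
        push_cast; field_simp; ring]
  rw [Complex.exp_add, Complex.exp_int_mul_two_pi_mul_I, mul_one]

lemma key_scalar (g G1 G2 p q t : ℝ) (hg : 0 ≤ g) (hG1 : 0 ≤ G1) (hG2 : 0 ≤ G2)
    (ht : |t| ≤ p*q)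
    (hcase : (g ≤ G1 ∧ G1 + 1 ≤ G2) ∨ (g ≤ G2 ∧ G2 + 1 ≤ G1)) :
    2*g*(p^2+q^2) + (p-q)^2 ≤ G1*(p^2+q^2+2*t) + G2*(p^2+q^2-2*t) := by
  rw [abs_le] at ht
  rcases hcase with ⟨h1, h2⟩ | ⟨h1, h2⟩
  · nlinarith [mul_nonneg (by linarith : (0:ℝ) ≤ G2 - G1) (by linarith : (0:ℝ) ≤ p*q - t),
      mul_nonneg (by linarith : (0:ℝ) ≤ G1 - g) (by positivity : (0:ℝ) ≤ p^2+q^2),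
      mul_nonneg (by linarith : (0:ℝ) ≤ G2 - G1 - 1) (sq_nonneg (p-q))]
  · nlinarith [mul_nonneg (by linarith : (0:ℝ) ≤ G1 - G2) (by linarith : (0:ℝ) ≤ p*q + t),
      mul_nonneg (by linarith : (0:ℝ) ≤ G2 - g) (by positivity : (0:ℝ) ≤ p^2+q^2),
      mul_nonneg (by linarith : (0:ℝ) ≤ G1 - G2 - 1) (sq_nonneg (p-q))]

lemma keyC (g G1 G2 : ℝ) (hg : 0 ≤ g) (hG1 : 0 ≤ G1) (hG2 : 0 ≤ G2)
    (hcase : (g ≤ G1 ∧ G1 + 1 ≤ G2) ∨ (g ≤ G2 ∧ G2 + 1 ≤ G1)) (α β c : ℂ)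
    (hc : ‖c‖ = 1) :
    2*g*(Complex.normSq α + Complex.normSq β) + (‖α‖ - ‖β‖)^2
      ≤ G1 * Complex.normSq (α + c*β) + G2 * Complex.normSq (α - c*β) := by
  have hq : Complex.normSq (c*β) = Complex.normSq β := by
    rw [Complex.normSq_mul, ← Complex.sq_norm c, hc]; ring
  have habs : ‖c*β‖ = ‖β‖ := by rw [norm_mul, hc, one_mul]
  have hplus : Complex.normSq (α + c*β)
      = Complex.normSq α + Complex.normSq β + 2*((α * (starRingEnd ℂ) (c*β)).re) := by
    rw [Complex.normSq_add, hq]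
  have hminus : Complex.normSq (α - c*β)
      = Complex.normSq α + Complex.normSq β - 2*((α * (starRingEnd ℂ) (c*β)).re) := by
    rw [Complex.normSq_sub, hq]
  have ht : |(α * (starRingEnd ℂ) (c*β)).re| ≤ ‖α‖ * ‖β‖ := by
    refine le_trans (Complex.abs_re_le_norm _) ?_
    rw [norm_mul, Complex.norm_conj, habs]
  have h := key_scalar g G1 G2 (‖α‖) (‖β‖)
    ((α * (starRingEnd ℂ) (c*β)).re) hg hG1 hG2 ht hcase
  rw [hplus, hminus]
  rw [← Complex.sq_norm α, ← Complex.sq_norm β]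
  linarith [h]

end

end DirichletCompareAux

open DirichletCompareAux in
/-- odd case of the Dirichlet form comparison, Proposition 4.1:
under the compatibility conditions on the weight pair `(γ_n, γ_{2n})` and the
scalar inequality, the `n`-level Dirichlet forms are dominated by the `2n`-level one.
The conclusion is an inequality in the complex order. -/
theorem dirichlet_compare_odd (n : ℕ) (hn : 3 ≤ n) (hno : Odd n)
    (γn γ2n : ℕ → ℝ)
    (hγn0 : ∀ k, k < n → 0 ≤ γn k) (hγ2n0 : ∀ k, k < 2 * n → 0 ≤ γ2n k)
    (h00 : γn 0 = 0) (h00' : γ2n 0 = 0)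
    (hsymn : ∀ k, 1 ≤ k → k ≤ n - 1 → γn k = γn (n - k))
    (hsym2n : ∀ k, 1 ≤ k → k ≤ 2 * n - 1 → γ2n k = γ2n (2 * n - k))
    (hge : ∀ k, 1 ≤ k → k ≤ (n - 1) / 2 → γn k ≤ γ2n k)
    (hgap : ∀ k, k ≤ (n - 1) / 2 → 0 ≤ γ2n (n - k) - γ2n k - 1)
    (hscal : ∀ x : ℝ, 0 ≤ x →
      0 ≤ γ2n n * (1 - x) ^ 2 - (1 + x ^ 2) + 2 * x)
    (a b : Fin n → ℝ) (ha : ∀ i, 0 ≤ a i) (hb : ∀ i, 0 ≤ b i) :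
    quadForm n (GammaMat n γn) a + quadForm n (GammaMat n γn) b
      + (((1 / (2 * n) : ℝ) *
          (Real.sqrt (∑ i, a i ^ 2) - Real.sqrt (∑ i, b i ^ 2)) ^ 2 : ℝ) : ℂ)
    ≤ 2 * quadForm (2 * n) (GammaMat (2 * n) γ2n) (interleave n a b) := by
  classical
  obtain ⟨mm, hmm⟩ := hno
  have hn0 : 0 < n := by omega
  have h2n0 : 0 < 2 * n := by omega
  have hNpos : (0:ℝ) < (n:ℝ) := by exact_mod_cast hn0
  rw [quad_eq n hn0 γn a, quad_eq n hn0 γn b, quad_eq (2*n) h2n0 γ2n (interleave n a b)]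
  rw [← Complex.ofReal_add, ← Complex.ofReal_add,
    show ((2:ℂ)) = ((2:ℝ):ℂ) from by norm_num, ← Complex.ofReal_mul, Complex.real_le_real]
  -- now a purely real inequality
  set X1 := ∑ k ∈ Finset.range n, γn k * Complex.normSq (Tr n a k) with hX1
  set X2 := ∑ k ∈ Finset.range n, γn k * Complex.normSq (Tr n b k) with hX2
  set Y := ∑ k ∈ Finset.range (2*n), γ2n k * Complex.normSq (Tr (2*n) (interleave n a b) k) with hY
  -- pointwise inequality
  have hpoint : ∀ k ∈ Finset.range n,
      2 * γn k * (Complex.normSq (Tr n a k) + Complex.normSq (Tr n b k))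
        + (‖Tr n a k‖ - ‖Tr n b k‖)^2
      ≤ γ2n k * Complex.normSq (Tr (2*n) (interleave n a b) k)
        + γ2n (n + k) * Complex.normSq (Tr (2*n) (interleave n a b) (n + k)) := by
    intro k hk
    have hk' : k < n := Finset.mem_range.1 hk
    have hΛ1 : Tr (2*n) (interleave n a b) k
        = Tr n a k + Complex.exp (((2*Real.pi*k/(2*n) : ℝ)) * Complex.I) * Tr n b k :=
      Tr_interleave n hn0 a b k
    have hΛ2 : Tr (2*n) (interleave n a b) (n + k)
        = Tr n a k - Complex.exp (((2*Real.pi*k/(2*n) : ℝ)) * Complex.I) * Tr n b k := by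
      rw [Tr_interleave n hn0 a b (n + k), Tr_add_period n hn0 a k, Tr_add_period n hn0 b k]
      have hre : (2*Real.pi*((n+k:ℕ):ℝ)/(2*(n:ℝ))) = 2*Real.pi*(k:ℝ)/(2*(n:ℝ)) + Real.pi := by
        push_cast
        field_simp
        ring
      rw [show ((2*Real.pi*((n+k:ℕ):ℝ)/(2*(n:ℝ)))) = (2*Real.pi*(k:ℝ)/(2*(n:ℝ)) + Real.pi) from hre,
        Complex.ofReal_add, add_mul, Complex.exp_add, Complex.exp_pi_mul_I]
      ring
    have hsymk : γ2n (n + k) = γ2n (n - k) := by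
      rcases Nat.eq_zero_or_pos k with rfl | hk1
      · simp
      · have h := hsym2n (n + k) (by omega) (by omega)
        rw [h]
        congr 1
        omega
    rw [hΛ1, hΛ2, hsymk]
    have hcase : (γn k ≤ γ2n k ∧ γ2n k + 1 ≤ γ2n (n - k)) ∨
        (γn k ≤ γ2n (n - k) ∧ γ2n (n - k) + 1 ≤ γ2n k) := by
      rcases le_or_gt k ((n-1)/2) with hle | hgt
      · left
        constructor
        · rcases Nat.eq_zero_or_pos k with rfl | hk1
          · rw [h00, h00']
          · exact hge k hk1 hle
        · have := hgap k hle
          linarith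
      · right
        have hk1 : 1 ≤ k := by omega
        have hkn : k ≤ n - 1 := by omega
        have h1 : 1 ≤ n - k := by omega
        have h2 : n - k ≤ (n - 1) / 2 := by omega
        constructor
        · rw [hsymn k hk1 hkn]
          exact hge (n - k) h1 h2
        · have := hgap (n - k) h2
          rw [show n - (n - k) = k from by omega] at this
          linarith
    exact keyC (γn k) (γ2n k) (γ2n (n - k)) (hγn0 k hk') (hγ2n0 k (by omega))
      (hγ2n0 (n - k) (by omega)) hcase (Tr n a k) (Tr n b k)
      (Complex.exp (((2*Real.pi*k/(2*n) : ℝ)) * Complex.I))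
      (Complex.norm_exp_ofReal_mul_I _)
  -- summed inequality
  have hsum : ∑ k ∈ Finset.range n,
      (2 * γn k * (Complex.normSq (Tr n a k) + Complex.normSq (Tr n b k))
        + (‖Tr n a k‖ - ‖Tr n b k‖)^2) ≤ Y := by
    have hsplit : ∀ f : ℕ → ℝ, ∑ k ∈ Finset.range (2*n), f k
        = ∑ k ∈ Finset.range n, f k + ∑ k ∈ Finset.range n, f (n+k) := by
      intro f
      rw [show 2*n = n + n from by omega]
      exact Finset.sum_range_add f n n
    rw [hY, hsplit (fun k => γ2n k * Complex.normSq (Tr (2*n) (interleave n a b) k)),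
      ← Finset.sum_add_distrib]
    exact Finset.sum_le_sum hpoint
  -- Cauchy-Schwarz
  set SA := ∑ k ∈ Finset.range n, Complex.normSq (Tr n a k) with hSA
  set SB := ∑ k ∈ Finset.range n, Complex.normSq (Tr n b k) with hSB
  have hSA0 : 0 ≤ SA := Finset.sum_nonneg fun k _ => Complex.normSq_nonneg _
  have hSB0 : 0 ≤ SB := Finset.sum_nonneg fun k _ => Complex.normSq_nonneg _
  have ea : ∑ k ∈ Finset.range n, (‖Tr n a k‖)^2 = SA :=
    Finset.sum_congr rfl fun k _ => Complex.sq_norm _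
  have eb : ∑ k ∈ Finset.range n, (‖Tr n b k‖)^2 = SB :=
    Finset.sum_congr rfl fun k _ => Complex.sq_norm _
  have hCS : (Real.sqrt SA - Real.sqrt SB)^2
      ≤ ∑ k ∈ Finset.range n, (‖Tr n a k‖ - ‖Tr n b k‖)^2 := by
    have hcs := Real.sum_mul_le_sqrt_mul_sqrt (Finset.range n)
      (fun k => ‖Tr n a k‖) (fun k => ‖Tr n b k‖)
    rw [ea, eb] at hcs
    have expand : ∑ k ∈ Finset.range n, (‖Tr n a k‖ - ‖Tr n b k‖)^2
        = SA + SB - 2 * ∑ k ∈ Finset.range n, ‖Tr n a k‖ * ‖Tr n b k‖ := by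
      rw [← ea, ← eb, Finset.mul_sum, ← Finset.sum_add_distrib, ← Finset.sum_sub_distrib]
      exact Finset.sum_congr rfl fun k _ => by ring
    rw [expand]
    nlinarith [hcs, Real.sq_sqrt hSA0, Real.sq_sqrt hSB0, Real.sqrt_nonneg SA, Real.sqrt_nonneg SB]
  -- Parseval
  have hPa : SA = n * ∑ j : Fin n, (a j)^2 := parseval n hn0 a
  have hPb : SB = n * ∑ j : Fin n, (b j)^2 := parseval n hn0 b
  have hsq : ∀ u : Fin n → ℝ, Real.sqrt ((n:ℝ) * ∑ j : Fin n, (u j)^2)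
      = Real.sqrt (n:ℝ) * Real.sqrt (∑ j : Fin n, (u j)^2) :=
    fun u => Real.sqrt_mul (le_of_lt hNpos) _
  have hD : (Real.sqrt SA - Real.sqrt SB)^2
      = (n:ℝ) * (Real.sqrt (∑ i, a i ^ 2) - Real.sqrt (∑ i, b i ^ 2))^2 := by
    rw [hPa, hPb, hsq a, hsq b]
    have : (Real.sqrt (n:ℝ) * Real.sqrt (∑ j : Fin n, (a j)^2)
        - Real.sqrt (n:ℝ) * Real.sqrt (∑ j : Fin n, (b j)^2))^2
        = (Real.sqrt (n:ℝ))^2 * (Real.sqrt (∑ i, a i ^ 2) - Real.sqrt (∑ i, b i ^ 2))^2 := by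
      ring
    rw [this, Real.sq_sqrt (le_of_lt hNpos)]
  -- combine
  have e1 : ∑ k ∈ Finset.range n,
      2 * γn k * (Complex.normSq (Tr n a k) + Complex.normSq (Tr n b k))
      = 2 * X1 + 2 * X2 := by
    rw [hX1, hX2, Finset.mul_sum, Finset.mul_sum, ← Finset.sum_add_distrib]
    exact Finset.sum_congr rfl fun k _ => by ring
  have hK : 2 * X1 + 2 * X2
      + (n:ℝ) * (Real.sqrt (∑ i, a i ^ 2) - Real.sqrt (∑ i, b i ^ 2))^2 ≤ Y := by
    have hsum2 : 2 * X1 + 2 * X2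
        + ∑ k ∈ Finset.range n, (‖Tr n a k‖ - ‖Tr n b k‖)^2 ≤ Y := by
      calc 2 * X1 + 2 * X2
            + ∑ k ∈ Finset.range n, (‖Tr n a k‖ - ‖Tr n b k‖)^2
          = (∑ k ∈ Finset.range n,
              2 * γn k * (Complex.normSq (Tr n a k) + Complex.normSq (Tr n b k)))
            + ∑ k ∈ Finset.range n, (‖Tr n a k‖ - ‖Tr n b k‖)^2 := by
            rw [e1]
        _ = ∑ k ∈ Finset.range n,
              (2 * γn k * (Complex.normSq (Tr n a k) + Complex.normSq (Tr n b k))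
                + (‖Tr n a k‖ - ‖Tr n b k‖)^2) :=
            (Finset.sum_add_distrib).symm
        _ ≤ Y := hsum
    rw [← hD]
    linarith [hsum2, hCS]
  -- final arithmetic
  have hcast : ((2*n : ℕ):ℝ) = 2 * (n:ℝ) := by push_cast; ring
  have hcast2 : ((n^2 : ℕ):ℝ) = (n:ℝ)^2 := by push_cast; ring
  calc X1 / ((n:ℝ)^2) + X2 / ((n:ℝ)^2)
        + (1 / (2 * (n:ℝ))) * (Real.sqrt (∑ i, a i ^ 2) - Real.sqrt (∑ i, b i ^ 2))^2
      = (2 * X1 + 2 * X2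
          + (n:ℝ) * (Real.sqrt (∑ i, a i ^ 2) - Real.sqrt (∑ i, b i ^ 2))^2) / (2 * (n:ℝ)^2) := by
        field_simp
    _ ≤ Y / (2 * (n:ℝ)^2) := by
        apply div_le_div_of_nonneg_right hK
        positivity
    _ = 2 * (Y / (((2*n:ℕ)):ℝ)^2) := by
        rw [hcast]
        field_simp
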